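/- For all integers n and r with 1 ≤ r ≤ n−1, the cardinality of B⁺(n,r) equals V(n,r). -/

import Mathlib

open Finset

/-- A letter for arrangements: white, black, or decorated. -/
inductive Letter : Type
  | white : Letter
  | black : Letter
  | decorated : Letter
  deriving DecidableEq

/-- `B n r`: words of length `n` over `Letter` with exactly `r` black letters
whose last letter is not black. -/
def B (n r : ℕ) : Set (List Letter) :=
  {w | w.length = n ∧ w.count Letter.black = r ∧ w.getLast? ≠ some Letter.black}

/-- `B⁺ n r`: members of `B n r` containing a decorated letter strictly to the
right of the last black letter. -/
def Bplus (n r : ℕ) : Set (List Letter) :=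
  {w | w ∈ B n r ∧ ∃ a b : List Letter, w = a ++ Letter.decorated :: b ∧ Letter.black ∉ b}

/-- `V n r = ∑_{j=1}^{n−r} C(n−1−j,r−1)·2^{n−r−j}·(2^j−1)`. -/
def V (n r : ℕ) : ℕ :=
  ∑ j ∈ Icc 1 (n - r), (n - 1 - j).choose (r - 1) * 2 ^ (n - r - j) * (2 ^ j - 1)

/-! ### Auxiliary material -/

instance : Fintype Letter :=
  ⟨{Letter.white, Letter.black, Letter.decorated}, by intro x; cases x <;> simp⟩

namespace BplusAux

open Letter

lemma takeWhile_append_all {p : Letter → Bool} {l₁ l₂ : List Letter}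
    (h : ∀ x ∈ l₁, p x) :
    (l₁ ++ l₂).takeWhile p = l₁ ++ l₂.takeWhile p := by
  induction l₁ with
  | nil => simp
  | cons a t ih =>
    have ha : p a := h a (by simp)
    simp only [List.cons_append, List.takeWhile_cons, ha]
    simp [ih fun x hx => h x (by simp [hx])]

/-- Splitting at the last `black`. -/
lemma splitLast {l : List Letter} (h : black ∈ l) :
    ∃ p s, l = p ++ black :: s ∧ black ∉ s := by
  induction l using List.reverseRecOn with
  | nil => simp at h
  | append_singleton l x ih =>
    by_cases hx : x = black
    · exact ⟨l, [], by simp [hx], by simp⟩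
    · have hb : black ∈ l := by
        rcases List.mem_append.1 h with h' | h'
        · exact h'
        · simp at h'; exact absurd h'.symm hx
      obtain ⟨p, s, rfl, hs⟩ := ih hb
      exact ⟨p, s ++ [x], by simp, by simp [hs, Ne.symm hx]⟩

lemma split_unique_aux {p s : List Letter} (hs : black ∉ s) :
    (p ++ black :: s).reverse.takeWhile (· ≠ black) = s.reverse := by
  have : (p ++ black :: s).reverse = s.reverse ++ black :: p.reverse := by simp
  rw [this, takeWhile_append_all (by intro x hx; simp; rintro rfl; exact hs (by simpa using hx))]
  simp [List.takeWhile_cons]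

lemma split_unique {p s p' s' : List Letter} (hs : black ∉ s) (hs' : black ∉ s')
    (h : p ++ black :: s = p' ++ black :: s') : p = p' ∧ s = s' := by
  have h1 := split_unique_aux (p := p) hs
  have h2 := split_unique_aux (p := p') hs'
  rw [h] at h1
  have hss : s = s' := by
    have := h1.symm.trans h2
    exact List.reverse_injective this
  subst hss
  exact ⟨List.append_cancel_right h, rfl⟩

/-- Lists of a given length, as a Finset. -/
def listsF : ℕ → Finset (List Letter)
  | 0 => {[]}
  | (m+1) => Finset.univ.biUnion (fun a => (listsF m).image (a :: ·))

lemma mem_listsF {m : ℕ} {l : List Letter} : l ∈ listsF m ↔ l.length = m := by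
  induction m generalizing l with
  | zero => cases l <;> simp [listsF]
  | succ m ih =>
    cases l with
    | nil => simp [listsF]
    | cons a t => simp [listsF, ih]

lemma cons_injective (a : Letter) : Function.Injective (a :: · : List Letter → List Letter) := by
  intro x y h; simpa using h

lemma card_filter_count (m k : ℕ) :
    ((listsF m).filter (fun l => l.count black = k)).card = m.choose k * 2 ^ (m - k) := by
  induction m generalizing k with
  | zero =>
    cases k with
    | zero => simp [listsF, Finset.filter_singleton]
    | succ k => simp [listsF, Finset.filter_singleton]
  | succ m ih =>
    rw [show listsF (m+1) = Finset.univ.biUnion (fun a => (listsF m).image (a :: ·)) from rfl,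
      Finset.filter_biUnion, Finset.card_biUnion]
    · have hterm : ∀ a : Letter,
          (Finset.filter (fun l => l.count black = k) ((listsF m).image (a :: ·))).card
          = (if a = black then (Finset.filter (fun l => l.count black + 1 = k) (listsF m)).card
             else (Finset.filter (fun l => l.count black = k) (listsF m)).card) := by
        intro a
        rw [Finset.filter_image, Finset.card_image_of_injective _ (cons_injective a)]
        by_cases ha : a = black
        · simp only [ha, if_true]
          congr 1
          apply Finset.filter_congr
          intro l _
          simp [List.count_cons]
        · simp only [ha, if_false]
          congr 1
          apply Finset.filter_congr
          intro l _
          simp [List.count_cons, ha]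
      have huniv : (Finset.univ : Finset Letter) = {white, black, decorated} := rfl
      rw [huniv]
      rw [Finset.sum_insert (by simp), Finset.sum_insert (by simp), Finset.sum_singleton]
      rw [hterm white, hterm black, hterm decorated]
      simp only [if_true, if_false, reduceCtorEq]
      cases k with
      | zero =>
        have : (Finset.filter (fun l => l.count black + 1 = 0) (listsF m)).card = 0 := by
          simp
        rw [this, ih 0]
        simp only [Nat.choose_zero_right, Nat.sub_zero, one_mul, pow_succ]
        ring
      | succ k =>
        have : (Finset.filter (fun l => l.count black + 1 = k + 1) (listsF m)).card
            = (Finset.filter (fun l => l.count black = k) (listsF m)).card := by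
          congr 1; apply Finset.filter_congr; intro l _; simp
        rw [this, ih k, ih (k+1), Nat.choose_succ_succ]
        rcases Nat.lt_or_ge k m with hk | hk
        · have e1 : m + 1 - (k + 1) = m - k := by omega
          have e2 : m - k = (m - (k+1)) + 1 := by omega
          rw [e1, e2, pow_succ]
          ring
        · have e1 : m.choose (k+1) = 0 := Nat.choose_eq_zero_of_lt (by omega)
          have e2 : m + 1 - (k + 1) = m - k := by omega
          rw [e1, e2]
          simp
    · intro a _ b _ hab
      simp only [Finset.disjoint_left]
      intro l hl hl'
      simp only [Finset.mem_filter, Finset.mem_image] at hl hl'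
      obtain ⟨⟨x, _, hx⟩, _⟩ := hl
      obtain ⟨⟨y, _, hy⟩, _⟩ := hl'
      rw [← hx] at hy
      exact hab (by injection hy with h _; exact h.symm)

lemma card_filter_noblack (m : ℕ) :
    ((listsF m).filter (fun l => black ∉ l)).card = 2 ^ m := by
  induction m with
  | zero => simp [listsF, Finset.filter_singleton]
  | succ m ih =>
    rw [show listsF (m+1) = Finset.univ.biUnion (fun a => (listsF m).image (a :: ·)) from rfl,
      Finset.filter_biUnion, Finset.card_biUnion]
    · have hterm : ∀ a : Letter,
          (Finset.filter (fun l => black ∉ l) ((listsF m).image (a :: ·))).card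
          = (if a = black then 0 else 2 ^ m) := by
        intro a
        rw [Finset.filter_image, Finset.card_image_of_injective _ (cons_injective a)]
        by_cases ha : a = black
        · simp [ha]
        · simp only [ha, if_false]
          rw [← ih]
          congr 1
          apply Finset.filter_congr
          intro l _
          simp [List.mem_cons, ha, Ne.symm ha]
      have huniv : (Finset.univ : Finset Letter) = {white, black, decorated} := rfl
      rw [huniv, Finset.sum_insert (by simp), Finset.sum_insert (by simp), Finset.sum_singleton,
        hterm white, hterm black, hterm decorated]
      simp [pow_succ]; ring
    · intro a _ b _ hab
      simp only [Finset.disjoint_left]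
      intro l hl hl'
      simp only [Finset.mem_filter, Finset.mem_image] at hl hl'
      obtain ⟨⟨x, _, hx⟩, _⟩ := hl
      obtain ⟨⟨y, _, hy⟩, _⟩ := hl'
      rw [← hx] at hy
      exact hab (by injection hy with h _; exact h.symm)

lemma card_T (j : ℕ) :
    ((listsF j).filter (fun l => black ∉ l ∧ decorated ∈ l)).card = 2 ^ j - 1 := by
  have key : (listsF j).filter (fun l => black ∉ l ∧ decorated ∈ l)
      = ((listsF j).filter (fun l => black ∉ l)) \ {List.replicate j white} := by
    ext l
    simp only [Finset.mem_filter, Finset.mem_sdiff, Finset.mem_singleton]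
    constructor
    · rintro ⟨hl, hb, hd⟩
      refine ⟨⟨hl, hb⟩, ?_⟩
      rintro rfl
      have := List.eq_of_mem_replicate hd
      exact absurd this (by simp)
    · rintro ⟨⟨hl, hb⟩, hne⟩
      refine ⟨hl, hb, ?_⟩
      by_contra hd
      apply hne
      rw [List.eq_replicate_iff]
      refine ⟨mem_listsF.1 hl, ?_⟩
      intro b hbmem
      cases b with
      | white => rfl
      | black => exact absurd hbmem hb
      | decorated => exact absurd hbmem hd
  rw [key, Finset.card_sdiff_of_subset]
  · rw [card_filter_noblack, Finset.card_singleton]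
  · simp only [Finset.singleton_subset_iff, Finset.mem_filter]
    constructor
    · rw [mem_listsF]; simp
    · intro h
      have := List.eq_of_mem_replicate h
      simp at this

/-- The main Finset. -/
def BplusF (n r : ℕ) : Finset (List Letter) :=
  (Icc 1 (n - r)).biUnion (fun j =>
    (((listsF (n - 1 - j)).filter (fun l => l.count black = r - 1)) ×ˢ
     ((listsF j).filter (fun l => black ∉ l ∧ decorated ∈ l))).image
      (fun p => p.1 ++ black :: p.2))

lemma coe_BplusF (n r : ℕ) (h1 : 1 ≤ r) (h2 : r + 1 ≤ n) :
    Bplus n r = ↑(BplusF n r) := by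
  ext w
  simp only [BplusF, Finset.coe_biUnion, Set.mem_iUnion, Finset.mem_coe, Finset.mem_image,
    Finset.mem_product, Finset.mem_filter, mem_listsF, Finset.mem_Icc, Prod.exists]
  constructor
  · rintro ⟨⟨hlen, hcount, hlast⟩, a, b, rfl, hab⟩
    have hbmem : black ∈ a ++ decorated :: b := by
      rw [← List.count_pos_iff, hcount]; omega
    obtain ⟨p, s, heq, hs⟩ := splitLast hbmem
    -- decorated ∈ s
    have hbina : black ∈ a := by
      rcases List.mem_append.1 hbmem with h | h
      · exact h
      · rcases List.mem_cons.1 h with h | h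
        · exact absurd h.symm (by simp)
        · exact absurd h hab
    obtain ⟨a₁, a₂, rfl, ha₂⟩ := splitLast hbina
    have heq2 : a₁ ++ black :: (a₂ ++ decorated :: b) = p ++ black :: s := by
      simpa using heq
    obtain ⟨-, hseq⟩ := split_unique (by simp [ha₂, hab]) hs heq2
    have hdecs : decorated ∈ s := by rw [← hseq]; simp
    refine ⟨s.length, ⟨?_, ?_⟩, p, s, ⟨⟨?_, ?_⟩, rfl, hs, hdecs⟩, heq.symm⟩
    · rcases s with _ | ⟨x, t⟩
      · simp at hdecs
      · simp
    · have hl : (p ++ black :: s).length = n := by rw [← heq]; exact hlen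
      have hc : (p ++ black :: s).count black = r := by rw [← heq]; exact hcount
      simp [List.count_append, List.count_cons] at hc
      have hcs : s.count black = 0 := by
        rw [List.count_eq_zero]; exact hs
      simp [List.length_append] at hl
      have hple : r - 1 ≤ p.length := by
        have : p.count black ≤ p.length := List.count_le_length
        omega
      omega
    · have hl : (p ++ black :: s).length = n := by rw [← heq]; exact hlen
      simp [List.length_append] at hl
      omega
    · have hc : (p ++ black :: s).count black = r := by rw [← heq]; exact hcount
      have hcs : s.count black = 0 := by rw [List.count_eq_zero]; exact hs
      simp [List.count_append, List.count_cons, hcs] at hc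
      omega
  · rintro ⟨j, ⟨hj1, hj2⟩, p, s, ⟨⟨hp1, hp2⟩, hs1, hs2⟩, rfl⟩
    subst hs1
    have hsne : s ≠ [] := by rintro rfl; simp at hs2
    have hlen : (p ++ black :: s).length = n := by
      simp [List.length_append, hp1]; omega
    have hcount : (p ++ black :: s).count black = r := by
      have hcs : s.count black = 0 := by rw [List.count_eq_zero]; exact hs2.1
      simp [List.count_append, List.count_cons, hcs, hp2]; omega
    have hlast : (p ++ black :: s).getLast? ≠ some black := by
      rw [List.getLast?_append]
      have : (black :: s).getLast? = s.getLast? := by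
        cases s with
        | nil => exact absurd rfl hsne
        | cons x t => simp [List.getLast?_cons_cons]
      rw [this]
      rcases List.getLast?_eq_getLast hsne with h
      rw [h]
      simp only [Option.some_or]
      intro hcontra
      have : s.getLast hsne ∈ s := List.getLast_mem hsne
      rw [Option.some.injEq] at hcontra
      rw [hcontra] at this
      exact hs2.1 this
    refine ⟨⟨hlen, hcount, hlast⟩, ?_⟩
    obtain ⟨u, v, rfl⟩ := List.append_of_mem hs2.2
    refine ⟨p ++ black :: u, v, by simp, fun hv => hs2.1 (by simp [hv])⟩

end BplusAux

theorem card_Bplus_eq_V (n r : ℕ) (h1 : 1 ≤ r) (h2 : r + 1 ≤ n) :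
    (Bplus n r).ncard = V n r := by
  open BplusAux Letter in
  rw [coe_BplusF n r h1 h2, Set.ncard_coe_finset, BplusF, Finset.card_biUnion]
  · rw [V]
    apply Finset.sum_congr rfl
    intro j hj
    rw [Finset.mem_Icc] at hj
    rw [Finset.card_image_of_injOn, Finset.card_product, card_filter_count, card_T]
    · have : n - 1 - j - (r - 1) = n - r - j := by omega
      rw [this]
    · rintro ⟨p, s⟩ hps ⟨p', s'⟩ hps' heq
      simp only [Finset.mem_coe, Finset.mem_product, Finset.mem_filter] at hps hps'
      obtain ⟨h1, h2⟩ := split_unique hps.2.2.1 hps'.2.2.1 heq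
      simp only [Prod.mk.injEq]
      exact ⟨h1, h2⟩
  · intro j hj j' hj' hjj'
    simp only [Finset.disjoint_left]
    intro w hw hw'
    simp only [Finset.mem_image, Finset.mem_product, Finset.mem_filter, mem_listsF,
      Prod.exists] at hw hw'
    obtain ⟨p, s, ⟨_, ⟨hs1, hs2, _⟩⟩, rfl⟩ := hw
    obtain ⟨p', s', ⟨_, ⟨hs1', hs2', _⟩⟩, heq⟩ := hw'
    obtain ⟨-, rfl⟩ := split_unique hs2' hs2 heq
    exact hjj' (hs1.symm.trans hs1')
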